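/- Let H = C_q wr A with A finite abelian acting regularly on the base B = C_q^{|A|}, and let a ∈ A be a nontrivial element. Then the subgroup B_a = [B,a] is normal in H and contains the center Z(H). -/
import Mathlib


/-- The automorphism of the base group `B = K → M` of the regular wreath product
`M ≀ K` given by the (left regular) permutation action of `k ∈ K`. -/
def shiftAut {K M : Type*} [Group K] [Group M] (k : K) : MulAut (K → M) where
  toFun f := fun t => f (k⁻¹ * t)
  invFun f := fun t => f (k * t)
  left_inv f := by funext t; simp [← mul_assoc]
  right_inv f := by funext t; simp [← mul_assoc]
  map_mul' f g := rfl

/-- The regular permutation action of `K` on the base group `K → M`, as a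
homomorphism into the automorphism group; `M ≀ K = (K → M) ⋊ K` via this action. -/
def shiftHom (K M : Type*) [Group K] [Group M] : K →* MulAut (K → M) where
  toFun := shiftAut
  map_one' := by ext f t; simp [shiftAut]
  map_mul' a b := by ext f t; simp [shiftAut, mul_assoc]

lemma shiftAut_apply {K M : Type*} [Group K] [Group M] (k : K) (f : K → M) (t : K) :
    shiftAut k f t = f (k⁻¹ * t) := rfl

/-- The map `b ↦ b⁻¹ * b^a` as a homomorphism on the abelian base group. -/
def psiHom {K M : Type*} [Group K] [CommGroup M] (a : K) :
    (K → M) →* (K → M) where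
  toFun b := b⁻¹ * shiftAut a b
  map_one' := by simp
  map_mul' b c := by
    simp only [mul_inv, map_mul]
    exact mul_mul_mul_comm _ _ _ _

lemma shiftAut_psiHom {K M : Type*} [CommGroup K] [CommGroup M] (k a : K)
    (b : K → M) : shiftAut k (psiHom a b) = psiHom a (shiftAut k b) := by
  funext t
  simp [psiHom, shiftAut_apply, mul_left_comm]

/-- Let `H = C_q ≀ A` with `A` cyclic of order `q^k` (`k ≥ 1`) acting regularly on the
base `B = C_q^{|A|}`, and let `a` be a generator of `A`. Then `B_a = [B,a]` is normal
in `H` and contains the center `Z(H)`. -/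
theorem stmt_17 (q : ℕ) (hq : q.Prime) [NeZero q] {A : Type*} [CommGroup A]
    [Finite A] (k : ℕ) (hk : 1 ≤ k) (hA : Nat.card A = q ^ k)
    (a : A) (ha : Subgroup.zpowers a = ⊤) :
    ((Subgroup.closure {x : A → Multiplicative (ZMod q) |
        ∃ b : A → Multiplicative (ZMod q), x = b⁻¹ * shiftAut a b}).map
          (SemidirectProduct.inl (φ := shiftHom A (Multiplicative (ZMod q))))).Normal ∧
    Subgroup.center ((A → Multiplicative (ZMod q))
        ⋊[shiftHom A (Multiplicative (ZMod q))] A)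
      ≤ (Subgroup.closure {x : A → Multiplicative (ZMod q) |
          ∃ b : A → Multiplicative (ZMod q), x = b⁻¹ * shiftAut a b}).map
            (SemidirectProduct.inl (φ := shiftHom A (Multiplicative (ZMod q)))) := by
  classical
  set M := Multiplicative (ZMod q) with hM
  set φ := shiftHom A M with hφ
  have hset : {x : A → M | ∃ b : A → M, x = b⁻¹ * shiftAut a b}
      = Set.range (psiHom a : (A → M) →* (A → M)) := by
    ext x
    simp [psiHom, eq_comm]
  have hcl : Subgroup.closure {x : A → M | ∃ b : A → M, x = b⁻¹ * shiftAut a b}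
      = (psiHom a : (A → M) →* (A → M)).range := by
    rw [hset, ← MonoidHom.coe_range, Subgroup.closure_eq]
  rw [hcl]
  have hconj : ∀ (g : (A → M) ⋊[φ] A) (x : A → M),
      g * SemidirectProduct.inl x * g⁻¹ = SemidirectProduct.inl (φ g.right x) := by
    intro g x
    ext
    · simp only [SemidirectProduct.mul_left, SemidirectProduct.left_inl,
        SemidirectProduct.inv_left, SemidirectProduct.mul_right,
        SemidirectProduct.right_inl, mul_one, SemidirectProduct.inv_right]
      rw [← MulAut.mul_apply, ← map_mul, mul_inv_cancel, map_one, MulAut.one_apply,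
        mul_comm g.left, mul_inv_cancel_right]
    · simp [SemidirectProduct.mul_right]
  constructor
  · constructor
    intro n hn g
    obtain ⟨x, hx, rfl⟩ := hn
    obtain ⟨b, rfl⟩ := hx
    rw [hconj]
    exact ⟨psiHom a (shiftAut g.right b), ⟨_, rfl⟩, by
      rw [← shiftAut_psiHom g.right a b]; rfl⟩
  · intro z hz
    rw [Subgroup.mem_center_iff] at hz
    -- z.right = 1
    have hzr : z.right = 1 := by
      by_contra hne
      set g : A → M := fun s => if s = 1 then Multiplicative.ofAdd (1 : ZMod q) else 1 with hg
      have h := hz (SemidirectProduct.inl g)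
      have hleft := congrArg SemidirectProduct.left h
      simp only [SemidirectProduct.mul_left, SemidirectProduct.left_inl,
        SemidirectProduct.right_inl, map_one, MulAut.one_apply] at hleft
      -- hleft : g * z.left = z.left * φ z.right g
      have hfix : φ z.right g = g := by
        rw [mul_comm z.left] at hleft
        exact (mul_right_cancel hleft).symm
      have h2 := congrFun hfix z.right
      rw [show (φ z.right) g = shiftAut z.right g from rfl, shiftAut_apply] at h2
      simp only [hg, inv_mul_cancel, if_pos rfl, if_neg hne] at h2
      haveI := Fact.mk hq
      have : (0 : ZMod q) = 1 := by
        simpa using congrArg Multiplicative.toAdd h2.symm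
      exact zero_ne_one this
    have hconst : ∀ t, z.left t = z.left 1 := by
      intro t
      have h := hz (SemidirectProduct.inr t)
      have hleft := congrArg SemidirectProduct.left h
      simp only [SemidirectProduct.mul_left, SemidirectProduct.left_inr,
        SemidirectProduct.right_inr, one_mul, mul_one, hzr, map_one] at hleft
      -- hleft : φ t z.left = z.left * ...
      have h2 := congrFun hleft t
      rw [show (φ t) z.left = shiftAut t z.left from rfl, shiftAut_apply] at h2
      simpa using h2.symm
    -- construct the preimage of the constant function
    set c : M := z.left 1 with hc
    have hex : ∀ t : A, ∃ m : ℤ, a ^ m = t := by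
      intro t
      have : t ∈ Subgroup.zpowers a := by rw [ha]; trivial
      exact this
    choose e he using hex
    have horder : orderOf a = q ^ k := by
      rw [← hA, ← Nat.card_zpowers, ha, Nat.card_congr (Equiv.Set.univ A).symm]
      rfl
    have hcq : c ^ (q : ℤ) = 1 := by
      have h1 : c ^ q = 1 := by
        have := pow_card_eq_one' (G := M) (x := c)
        simpa [hM, Nat.card_eq_fintype_card] using this
      rw [zpow_natCast, h1]
    set b : A → M := fun t => c ^ (-(e t)) with hb
    have hpsi : psiHom a b = z.left := by
      funext t
      have key : a ^ (e t - e (a⁻¹ * t) - 1) = 1 := by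
        rw [zpow_sub, zpow_sub, he, he, zpow_one]
        group
      have hdvd : ((orderOf a : ℕ) : ℤ) ∣ (e t - e (a⁻¹ * t) - 1) :=
        orderOf_dvd_iff_zpow_eq_one.mpr key
      have hqdvd : (q : ℤ) ∣ (e t - e (a⁻¹ * t) - 1) := by
        refine dvd_trans ?_ hdvd
        rw [horder]
        exact_mod_cast dvd_pow_self (q : ℤ) (by omega : k ≠ 0)
      obtain ⟨m, hm⟩ := hqdvd
      have : (psiHom a b) t = c ^ (e t - e (a⁻¹ * t)) := by
        show (b t)⁻¹ * b (a⁻¹ * t) = _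
        rw [hb]
        simp only [← zpow_neg, neg_neg]
        rw [← zpow_add, sub_eq_add_neg]
      rw [this, hconst t, show e t - e (a⁻¹ * t) = (e t - e (a⁻¹ * t) - 1) + 1 by ring,
        zpow_add, hm, zpow_mul, hcq, one_zpow, one_mul, zpow_one, hc]
    refine ⟨z.left, ⟨b, hpsi⟩, ?_⟩
    have hzeq : z = SemidirectProduct.inl z.left := by
      ext
      · rfl
      · rw [hzr]; rfl
    exact hzeq.symm
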